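/- Let G be a graph containing neither C₄ nor C₆ as subgraphs, and let x be a vertex. Then every vertex of N_3(x) is adjacent to exactly one vertex of N_2(x). -/

import Mathlib

open SimpleGraph Set

variable {V : Type*} [Fintype V] [DecidableEq V]

/-- `N_i(S)`: vertices whose minimum distance to the set `S` equals `i`. -/
def NSet (G : SimpleGraph V) (i : ℕ) (S : Set V) : Set V :=
  {u | (⨅ s ∈ S, G.edist s u) = (i : ℕ∞)}

/-- `N_i(x)`: vertices at distance exactly `i` from `x`. -/
def Nv (G : SimpleGraph V) (i : ℕ) (x : V) : Set V := {u | G.edist x u = (i : ℕ∞)}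

/-- `S` is an independent set of `G`. -/
def IsIndep (G : SimpleGraph V) (S : Set V) : Prop :=
  S.Pairwise fun u v => ¬ G.Adj u v

/-- `A` dominates `T`. -/
def Dominates (G : SimpleGraph V) (A T : Set V) : Prop :=
  T ⊆ A ∪ {u | ∃ a ∈ A, G.Adj a u}

/-- `S` is a maximal independent set of `G`. -/
def IsMaxIndep (G : SimpleGraph V) (S : Set V) : Prop :=
  IsIndep G S ∧ ∀ T, IsIndep G T → S ⊆ T → T = S

/-- The induced subgraph on `X ∪ Y` is complete bipartite with parts `X`, `Y`. -/
def IsCompBipartite (G : SimpleGraph V) (X Y : Set V) : Prop :=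
  X.Nonempty ∧ Y.Nonempty ∧ Disjoint X Y ∧ IsIndep G X ∧ IsIndep G Y ∧
    ∀ x ∈ X, ∀ y ∈ Y, G.Adj x y

/-- `B = (X, Y)` is a generating subgraph of `G`. -/
def Generating (G : SimpleGraph V) (X Y : Set V) : Prop :=
  IsCompBipartite G X Y ∧ ∃ S : Set V, IsIndep G S ∧ Disjoint S (X ∪ Y) ∧
    IsMaxIndep G (S ∪ X) ∧ IsMaxIndep G (S ∪ Y)

/-- `G` contains a (not necessarily induced) cycle on `k` vertices. -/
def HasCycle (G : SimpleGraph V) (k : ℕ) : Prop :=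
  ∃ f : ZMod k → V, Function.Injective f ∧ ∀ i, G.Adj (f i) (f (i + 1))

/-- Weight of a set of vertices. -/
noncomputable def wt (w : V → ℝ) (S : Set V) : ℝ := ∑ x ∈ S.toFinite.toFinset, w x

/-- `G` is `w`-well-covered. -/
def WWellCovered (G : SimpleGraph V) (w : V → ℝ) : Prop :=
  ∀ S T : Set V, IsMaxIndep G S → IsMaxIndep G T → wt w S = wt w T

lemma step_back (G : SimpleGraph V) {x v : V} {n : ℕ} (h : G.edist x v = ((n:ℕ∞)+1)) :
    ∃ u, G.Adj u v ∧ G.edist x u = n := by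
  have h' : G.edist x v = ((n+1 : ℕ) : ℕ∞) := by rw [h]; push_cast; ring
  obtain ⟨p, hp⟩ := G.exists_walk_of_edist_eq_coe h'
  set q := p.reverse with hq
  have hql : q.length = n + 1 := by simp [hq, hp]
  match q, hql with
  | SimpleGraph.Walk.cons (v := u) hadj r, hql =>
    refine ⟨u, hadj.symm, ?_⟩
    have hle : G.edist x u ≤ n := by
      have := G.edist_le r.reverse
      simpa [Nat.succ_inj.mp hql] using this
    have hge : (n : ℕ∞) ≤ G.edist x u := by
      have htri : G.edist x v ≤ G.edist x u + G.edist u v := G.edist_triangle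
      have h1 : G.edist u v ≤ 1 := by
        rw [edist_eq_one_iff_adj.mpr hadj.symm]
      have : (n:ℕ∞) + 1 ≤ G.edist x u + 1 := by
        calc (n:ℕ∞)+1 = G.edist x v := h.symm
        _ ≤ G.edist x u + G.edist u v := htri
        _ ≤ G.edist x u + 1 := by gcongr
      exact (ENat.add_le_add_iff_right (by simp)).mp this
    exact le_antisymm hle hge

theorem unique_neighbor_in_N2_of_noC4C6 (G : SimpleGraph V) (h4 : ¬ HasCycle G 4)
    (h6 : ¬ HasCycle G 6) (x : V) :
    ∀ v ∈ Nv G 3 x, ∃! u : V, u ∈ Nv G 2 x ∧ G.Adj u v := by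
  intro v hv
  have hv3 : G.edist x v = ((2:ℕ∞)+1) := by
    have : G.edist x v = ((3:ℕ):ℕ∞) := hv
    rw [this]; rfl
  obtain ⟨u, huv, hu2⟩ := step_back G hv3
  have hu2' : G.edist x u = ((1:ℕ∞)+1) := by rw [hu2]; rfl
  obtain ⟨a, hau, ha1⟩ := step_back G hu2'
  have hxa : G.Adj x a := edist_eq_one_iff_adj.mp (by rw [ha1]; rfl)
  refine ⟨u, ⟨hu2, huv⟩, ?_⟩
  rintro u' ⟨hu'2, hu'v⟩
  by_contra hne
  have hu'2x : G.edist x u' = ((2:ℕ):ℕ∞) := hu'2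
  have hu'2' : G.edist x u' = ((1:ℕ∞)+1) := by rw [hu'2x]; rfl
  obtain ⟨a', ha'u', ha'1⟩ := step_back G hu'2'
  have hxa' : G.Adj x a' := edist_eq_one_iff_adj.mp (by rw [ha'1]; rfl)
  -- distances: x:0 a,a':1 u,u':2 v:3
  have hx0 : G.edist x x = 0 := G.edist_self
  have hu2n : G.edist x u = ((2:ℕ):ℕ∞) := hu2
  have hv3n : G.edist x v = ((3:ℕ):ℕ∞) := hv
  -- distinctness helper
  have ne_of_edist : ∀ {p q : V}, G.edist x p ≠ G.edist x q → p ≠ q := by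
    intro p q h hpq; exact h (by rw [hpq])
  by_cases haa : a = a'
  · -- C4 : a u v u'
    subst haa
    exact h4 ⟨![a,u,v,u'], by
      intro i j hij
      have n1 : a ≠ u := ne_of_edist (by rw [ha1, hu2n]; decide)
      have n2 : a ≠ v := ne_of_edist (by rw [ha1, hv3n]; decide)
      have n3 : a ≠ u' := ne_of_edist (by rw [ha1, hu'2x]; decide)
      have n4 : u ≠ v := ne_of_edist (by rw [hu2n, hv3n]; decide)
      have n6 : v ≠ u' := ne_of_edist (by rw [hv3n, hu'2x]; decide)
      have n5 : u ≠ u' := fun h => hne h.symm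
      have hinj : Function.Injective (![a,u,v,u'] : Fin 4 → V) := by
        rw [← List.nodup_ofFn]; simp_all [List.ofFn_succ]
      exact hinj hij, by
      intro i
      fin_cases i <;> first | exact hau | exact huv | exact hu'v.symm | exact ha'u'.symm⟩
  · -- C6 : x a u v u' a'
    exact h6 ⟨![x,a,u,v,u',a'], by
      intro i j hij
      have m1 : x ≠ a := ne_of_edist (by rw [hx0, ha1]; decide)
      have m2 : x ≠ u := ne_of_edist (by rw [hx0, hu2n]; decide)
      have m3 : x ≠ v := ne_of_edist (by rw [hx0, hv3n]; decide)
      have m4 : x ≠ u' := ne_of_edist (by rw [hx0, hu'2x]; decide)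
      have m5 : x ≠ a' := ne_of_edist (by rw [hx0, ha'1]; decide)
      have n1 : a ≠ u := ne_of_edist (by rw [ha1, hu2n]; decide)
      have n2 : a ≠ v := ne_of_edist (by rw [ha1, hv3n]; decide)
      have n3 : a ≠ u' := ne_of_edist (by rw [ha1, hu'2x]; decide)
      have n4 : u ≠ v := ne_of_edist (by rw [hu2n, hv3n]; decide)
      have n6 : v ≠ u' := ne_of_edist (by rw [hv3n, hu'2x]; decide)
      have n7 : u ≠ a' := ne_of_edist (by rw [hu2n, ha'1]; decide)
      have n8 : v ≠ a' := ne_of_edist (by rw [hv3n, ha'1]; decide)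
      have n9 : u' ≠ a' := ne_of_edist (by rw [hu'2x, ha'1]; decide)
      have n5 : u ≠ u' := fun h => hne h.symm
      have hinj : Function.Injective (![x,a,u,v,u',a'] : Fin 6 → V) := by
        rw [← List.nodup_ofFn]; simp_all [List.ofFn_succ]
      exact hinj hij, by
      intro i
      fin_cases i <;>
        first | exact hxa | exact hau | exact huv | exact hu'v.symm | exact ha'u'.symm | exact hxa'.symm⟩
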